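/- Let n ≥ 2, 1 < p < ∞. If α ∈ ℝ and the function v(x) = |x|^α x₁ satisfies div(|∇v|^{p-2}∇v) = 0 at every point of ℝⁿ \ {0} where ∇v ≠ 0, then α + n + (p-2)(2α+3) = 0 and (α+2)[α(α+n) + (p-2)(α²+α-1)] = 0, or α = 0. -/

import Mathlib

open Real
open scoped RealInnerProductSpace

/-- The `p`-Laplacian `div(|∇f|^(p-2) ∇f)` of `f`, computed classically as the trace of the
derivative of the vector field `y ↦ ‖∇f(y)‖^(p-2) • ∇f(y)`. -/
noncomputable def pLaplacian {n : ℕ} (p : ℝ) (f : EuclideanSpace ℝ (Fin n) → ℝ)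
    (x : EuclideanSpace ℝ (Fin n)) : ℝ :=
  LinearMap.trace ℝ (EuclideanSpace ℝ (Fin n))
    ((fderiv ℝ (fun y => ‖gradient f y‖ ^ (p - 2) • gradient f y) x).toLinearMap)


-- norm squared of the gradient vector
lemma normsq_g {n : ℕ} (α : ℝ) (i0 : Fin n) (y : EuclideanSpace ℝ (Fin n)) (hs : (0:ℝ) < ‖y‖^2) :
    ‖(α * y i0 * (‖y‖^2 : ℝ) ^ (α/2 - 1)) • y
        + ((‖y‖^2 : ℝ) ^ (α/2)) • EuclideanSpace.single i0 (1:ℝ)‖^2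
      = (‖y‖^2 : ℝ) ^ (α-1) * (α*(α+2)*(y i0 * y i0) + ‖y‖^2) := by
  set s : ℝ := ‖y‖^2 with hsdef
  have hP : s ^ (α/2-1) * s ^ (α/2-1) = s ^ (α-2) := by
    rw [← Real.rpow_add hs]; congr 1; ring
  have hPR : s ^ (α/2-1) * s ^ (α/2) = s ^ (α-2) * s := by
    rw [← Real.rpow_add hs, show α/2-1+α/2 = (α-2)+1 by ring, Real.rpow_add hs, Real.rpow_one]
  have hRR : s ^ (α/2) * s ^ (α/2) = s ^ (α-2) * s * s := by
    rw [← Real.rpow_add hs, show α/2+α/2 = (α-2)+1+1 by ring, Real.rpow_add hs,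
      Real.rpow_add hs, Real.rpow_one]
  have hX : s ^ (α-1) = s ^ (α-2) * s := by
    rw [show α-1 = (α-2)+1 by ring, Real.rpow_add hs, Real.rpow_one]
  rw [norm_add_sq_real]
  rw [norm_smul, norm_smul, real_inner_smul_left, real_inner_smul_right,
    EuclideanSpace.inner_single_right, EuclideanSpace.norm_single]
  simp only [conj_trivial, norm_one, mul_one, mul_pow, Real.norm_eq_abs, sq_abs]
  rw [hX]
  have hyy : ‖y‖^2 = s := rfl
  rw [hyy]
  linear_combination (α^2 * (y i0 * y i0) * s) * hP + (2*α*(y i0 * y i0)) * hPR + hRR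

lemma FG_eq {n : ℕ} (α p : ℝ) (i0 : Fin n) (y : EuclideanSpace ℝ (Fin n))
    (hs : (0:ℝ) < ‖y‖^2) (hQ : (0:ℝ) < α*(α+2)*(y i0 * y i0) + ‖y‖^2) :
    ‖(α * y i0 * (‖y‖^2 : ℝ) ^ (α/2 - 1)) • y
        + ((‖y‖^2 : ℝ) ^ (α/2)) • EuclideanSpace.single i0 (1:ℝ)‖ ^ (p-2) •
      ((α * y i0 * (‖y‖^2 : ℝ) ^ (α/2 - 1)) • y
        + ((‖y‖^2 : ℝ) ^ (α/2)) • EuclideanSpace.single i0 (1:ℝ))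
    = (α * y i0 * (‖y‖^2 : ℝ) ^ ((α-1)*(p-2)/2 + α/2 - 1)
          * (α*(α+2)*(y i0 * y i0) + ‖y‖^2) ^ ((p-2)/2)) • y
      + ((‖y‖^2 : ℝ) ^ ((α-1)*(p-2)/2 + α/2)
          * (α*(α+2)*(y i0 * y i0) + ‖y‖^2) ^ ((p-2)/2)) • EuclideanSpace.single i0 (1:ℝ) := by
  set s : ℝ := ‖y‖^2 with hsdef
  set Q : ℝ := α*(α+2)*(y i0 * y i0) + ‖y‖^2 with hQdef
  set g : EuclideanSpace ℝ (Fin n) := (α * y i0 * s ^ (α/2 - 1)) • y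
      + (s ^ (α/2)) • EuclideanSpace.single i0 (1:ℝ) with hgdef
  have hgsq : ‖g‖^2 = s ^ (α-1) * Q := normsq_g α i0 y hs
  have hkey : ‖g‖ ^ (p-2) = s ^ ((α-1)*(p-2)/2) * Q ^ ((p-2)/2) := by
    have h1 : ‖g‖ ^ (p-2) = (‖g‖^2 : ℝ) ^ ((p-2)/2) := by
      rw [← Real.rpow_natCast ‖g‖ 2, ← Real.rpow_mul (norm_nonneg g)]
      congr 1; push_cast; ring
    rw [h1, hgsq, Real.mul_rpow (Real.rpow_nonneg hs.le _) hQ.le,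
      ← Real.rpow_mul hs.le, show (α-1)*((p-2)/2) = (α-1)*(p-2)/2 by ring]
  rw [smul_add, smul_smul, smul_smul, hkey]
  congr 1
  · congr 1
    have : s ^ ((α-1)*(p-2)/2) * Q ^ ((p-2)/2) * (α * y i0 * s ^ (α/2-1))
        = α * y i0 * (s ^ ((α-1)*(p-2)/2) * s ^ (α/2-1)) * Q ^ ((p-2)/2) := by ring
    rw [this, ← Real.rpow_add hs]
    congr 2
    ring
  · congr 1
    have : s ^ ((α-1)*(p-2)/2) * Q ^ ((p-2)/2) * s ^ (α/2)
        = (s ^ ((α-1)*(p-2)/2) * s ^ (α/2)) * Q ^ ((p-2)/2) := by ring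
    rw [this, ← Real.rpow_add hs]
lemma grad_v {n : ℕ} (α : ℝ) (i0 : Fin n) (y : EuclideanSpace ℝ (Fin n)) (hy : y ≠ 0) :
    HasGradientAt (fun z => ‖z‖ ^ α * z i0)
      ((α * y i0 * (‖y‖^2 : ℝ) ^ (α/2 - 1)) • y
        + ((‖y‖^2 : ℝ) ^ (α/2)) • EuclideanSpace.single i0 (1:ℝ)) y := by
  have hy0 : (0:ℝ) < ‖y‖ := norm_pos_iff.mpr hy
  have hsy : (0:ℝ) < ‖y‖^2 := by positivity
  have hfun : (fun z : EuclideanSpace ℝ (Fin n) => ‖z‖ ^ α * z i0)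
      = fun z => ((‖z‖^2 : ℝ) ^ (α/2)) * z i0 := by
    funext z
    congr 1
    rw [← Real.rpow_natCast ‖z‖ 2, ← Real.rpow_mul (norm_nonneg z)]
    rw [show ((2:ℕ):ℝ) * (α/2) = α by push_cast; ring]
  rw [hfun, hasGradientAt_iff_hasFDerivAt]
  have hs : HasFDerivAt (fun z : EuclideanSpace ℝ (Fin n) => (‖z‖^2 : ℝ))
      (2 • innerSL ℝ y) y := (hasStrictFDerivAt_norm_sq y).hasFDerivAt
  have hpow : HasFDerivAt (fun z : EuclideanSpace ℝ (Fin n) => (‖z‖^2 : ℝ) ^ (α/2))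
      ((α/2 * (‖y‖^2:ℝ) ^ (α/2 - 1)) • (2 • innerSL ℝ y)) y :=
    hs.rpow_const (Or.inl hsy.ne')
  have hw : HasFDerivAt (fun z : EuclideanSpace ℝ (Fin n) => z i0)
      ((EuclideanSpace.proj i0 : EuclideanSpace ℝ (Fin n) →L[ℝ] ℝ)) y :=
    ((EuclideanSpace.proj i0 : EuclideanSpace ℝ (Fin n) →L[ℝ] ℝ)).hasFDerivAt
  have hmul := hpow.mul hw
  convert hmul using 1
  case e'_11 => rfl
  case e'_9 => rfl
  ext h
  simp only [InnerProductSpace.toDual_apply_apply, ContinuousLinearMap.add_apply,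
    ContinuousLinearMap.smul_apply, ContinuousLinearMap.coe_smul', Pi.smul_apply,
    innerSL_apply_apply, smul_eq_mul, PiLp.proj_apply, map_one,
    inner_add_left, inner_smul_left, RCLike.inner_apply, conj_trivial]
  rw [EuclideanSpace.inner_single_left]
  simp only [map_one]
  ring


lemma trace_smulRight' {n : ℕ} (f : EuclideanSpace ℝ (Fin n) →L[ℝ] ℝ) (v : EuclideanSpace ℝ (Fin n)) :
    LinearMap.trace ℝ (EuclideanSpace ℝ (Fin n)) ((f.smulRight v).toLinearMap) = f v := by
  classical
  rw [LinearMap.trace_eq_matrix_trace ℝ (EuclideanSpace.basisFun (Fin n) ℝ).toBasis]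
  rw [Matrix.trace]
  have hv : v = ∑ i, v i • (EuclideanSpace.basisFun (Fin n) ℝ).toBasis i := by
    have := (EuclideanSpace.basisFun (Fin n) ℝ).toBasis.sum_repr v
    simpa using this.symm
  conv_rhs => rw [hv]
  rw [map_sum]
  simp only [Matrix.diag, LinearMap.toMatrix_apply, OrthonormalBasis.coe_toBasis,
    OrthonormalBasis.coe_toBasis_repr_apply, EuclideanSpace.basisFun_repr,
    ContinuousLinearMap.coe_coe, ContinuousLinearMap.smulRight_apply,
    EuclideanSpace.basisFun_apply, map_smul, smul_eq_mul, Pi.smul_apply,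
    PiLp.smul_apply]
  exact Finset.sum_congr rfl fun i _ => mul_comm _ _

lemma trace_formula {n : ℕ} (c d : ℝ) (f₁ f₂ : EuclideanSpace ℝ (Fin n) →L[ℝ] ℝ)
    (x v : EuclideanSpace ℝ (Fin n)) :
    LinearMap.trace ℝ (EuclideanSpace ℝ (Fin n))
      (((c • ContinuousLinearMap.id ℝ (EuclideanSpace ℝ (Fin n)) + f₁.smulRight x)
        + (d • (0 : EuclideanSpace ℝ (Fin n) →L[ℝ] EuclideanSpace ℝ (Fin n)) + f₂.smulRight v)).toLinearMap)
      = c * n + f₁ x + f₂ v := by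
  simp only [smul_zero, zero_add, ContinuousLinearMap.coe_add, map_add,
    ContinuousLinearMap.coe_smul, map_smul, ContinuousLinearMap.coe_id,
    LinearMap.trace_id, trace_smulRight', smul_eq_mul, finrank_euclideanSpace_fin,
    ContinuousLinearMap.coe_zero, LinearMap.map_zero, mul_zero, add_zero]

lemma key (n : ℕ) (hn : 2 ≤ n) (p : ℝ) (hp : 1 < p) (α t : ℝ) (hα : α ≠ 0) (ht : 0 < t)
    (v : EuclideanSpace ℝ (Fin n) → ℝ)
    (hv : v = fun y => ‖y‖ ^ α * y ⟨0, lt_of_lt_of_le two_pos hn⟩)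
    (h : ∀ x : EuclideanSpace ℝ (Fin n), x ≠ 0 → gradient v x ≠ 0 → pLaplacian p v x = 0) :
    α * (α + n + (p - 2) * (2 * α + 3)) * (1 + t^2)
      + α * ((α + 2) * (α * (α + n) + (p - 2) * (α ^ 2 + α - 1))) = 0 := by
  classical
  set i0 : Fin n := ⟨0, by omega⟩ with hi0
  set i1 : Fin n := ⟨1, by omega⟩ with hi1
  have hi01 : i0 ≠ i1 := by simp [hi0, hi1, Fin.ext_iff]
  set e0 : EuclideanSpace ℝ (Fin n) := EuclideanSpace.single i0 (1:ℝ) with he0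
  set xx : EuclideanSpace ℝ (Fin n) := e0 + EuclideanSpace.single i1 t with hxx
  have hx0 : xx i0 = 1 := by
    simp [hxx, he0, EuclideanSpace.single_apply, hi01, Ne.symm hi01]
  have hx1 : xx i1 = t := by
    simp [hxx, he0, EuclideanSpace.single_apply, hi01, Ne.symm hi01]
  have hu : ‖xx‖^2 = 1 + t^2 := by
    rw [← real_inner_self_eq_norm_sq, hxx, inner_add_add_self,
      real_inner_self_eq_norm_sq, real_inner_self_eq_norm_sq,
      EuclideanSpace.inner_single_right, EuclideanSpace.norm_single, EuclideanSpace.norm_single]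
    simp [he0, EuclideanSpace.inner_single_left, EuclideanSpace.single_apply, hi01, Ne.symm hi01, abs_of_pos ht]
  have hxne : xx ≠ 0 := by
    intro h0
    have : xx i0 = 0 := by rw [h0]; rfl
    rw [hx0] at this; norm_num at this
  have hsx : (0:ℝ) < ‖xx‖^2 := by rw [hu]; positivity
  have hQx : (0:ℝ) < α*(α+2)*(xx i0 * xx i0) + ‖xx‖^2 := by
    rw [hx0, hu]; nlinarith [sq_nonneg (α+1), sq_nonneg t, ht]
  set U : Set (EuclideanSpace ℝ (Fin n)) :=
    {y | (0:ℝ) < ‖y‖^2 ∧ (0:ℝ) < α*(α+2)*(y i0 * y i0) + ‖y‖^2} with hU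
  have hprc : Continuous fun y : EuclideanSpace ℝ (Fin n) => y i0 :=
    (EuclideanSpace.proj i0 : EuclideanSpace ℝ (Fin n) →L[ℝ] ℝ).continuous
  have hUopen : IsOpen U := by
    apply IsOpen.inter
    · exact isOpen_lt continuous_const ((continuous_norm).pow 2)
    · exact isOpen_lt continuous_const
        ((continuous_const.mul (hprc.mul hprc)).add ((continuous_norm).pow 2))
  have hxU : xx ∈ U := ⟨hsx, hQx⟩
  have hgrad : ∀ y ∈ U, gradient v y
      = (α * y i0 * (‖y‖^2 : ℝ) ^ (α/2 - 1)) • y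
        + ((‖y‖^2 : ℝ) ^ (α/2)) • EuclideanSpace.single i0 (1:ℝ) := by
    intro y hy
    have hyne : y ≠ 0 := by
      intro h0; rw [h0] at hy
      simp only [hU, Set.mem_setOf_eq, norm_zero] at hy
      exact absurd hy.1 (by norm_num)
    rw [hv]
    exact (grad_v α i0 y hyne).gradient
  have hFG : (fun y => ‖gradient v y‖ ^ (p-2) • gradient v y)
      =ᶠ[nhds xx] fun y =>
        (α * y i0 * (‖y‖^2 : ℝ) ^ ((α-1)*(p-2)/2 + α/2 - 1)
            * (α*(α+2)*(y i0 * y i0) + ‖y‖^2) ^ ((p-2)/2)) • y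
        + ((‖y‖^2 : ℝ) ^ ((α-1)*(p-2)/2 + α/2)
            * (α*(α+2)*(y i0 * y i0) + ‖y‖^2) ^ ((p-2)/2)) • e0 := by
    filter_upwards [hUopen.mem_nhds hxU] with y hy
    rw [hgrad y hy, he0]
    exact FG_eq α p i0 y hy.1 hy.2
  -- build the derivative of the explicit field at xx
  have hpr : HasFDerivAt (fun z : EuclideanSpace ℝ (Fin n) => z i0)
      ((EuclideanSpace.proj i0 : EuclideanSpace ℝ (Fin n) →L[ℝ] ℝ)) xx :=
    ((EuclideanSpace.proj i0 : EuclideanSpace ℝ (Fin n) →L[ℝ] ℝ)).hasFDerivAt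
  have hs' : HasFDerivAt (fun z : EuclideanSpace ℝ (Fin n) => (‖z‖^2 : ℝ))
      (2 • innerSL ℝ xx) xx := (hasStrictFDerivAt_norm_sq xx).hasFDerivAt
  have hQd := ((hpr.mul hpr).const_mul (α*(α+2))).add hs'
  have hQγ := hQd.rpow_const (p := (p-2)/2) (Or.inl hQx.ne')
  have hsa := hs'.rpow_const (p := (α-1)*(p-2)/2 + α/2 - 1) (Or.inl hsx.ne')
  have hsa1 := hs'.rpow_const (p := (α-1)*(p-2)/2 + α/2) (Or.inl hsx.ne')
  have hΦd := ((hpr.const_mul α).mul hsa).mul hQγ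
  have hΨd := hsa1.mul hQγ
  have hG := (hΦd.smul (hasFDerivAt_id xx)).add (hΨd.smul (hasFDerivAt_const e0 xx))
  have hfd := hFG.fderiv_eq.trans hG.fderiv
  have hgne : gradient v xx ≠ 0 := by
    rw [hgrad xx hxU]
    intro h0
    have h1 := congrArg (fun w : EuclideanSpace ℝ (Fin n) => w i1) h0
    simp only [PiLp.add_apply, PiLp.smul_apply, smul_eq_mul,
      EuclideanSpace.single_apply, Ne.symm hi01, if_false, mul_zero, PiLp.zero_apply,
      hx1] at h1
    have hc : α * xx i0 * (‖xx‖^2 : ℝ) ^ (α/2 - 1) ≠ 0 := by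
      rw [hx0, mul_one]
      exact mul_ne_zero hα (Real.rpow_pos_of_pos hsx _).ne'
    rw [add_zero] at h1
    exact (mul_ne_zero hc ht.ne') h1
  have h0 := h xx hxne hgne
  rw [pLaplacian, hfd, trace_formula] at h0
  simp only [ContinuousLinearMap.add_apply, ContinuousLinearMap.smul_apply,
    ContinuousLinearMap.coe_smul', Pi.smul_apply, innerSL_apply_apply, smul_eq_mul,
    PiLp.proj_apply, Pi.mul_apply, Pi.add_apply] at h0
  rw [he0] at h0
  simp only [id_eq, nsmul_eq_mul, real_inner_self_eq_norm_sq,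
    EuclideanSpace.inner_single_right, conj_trivial, EuclideanSpace.single_apply,
    if_pos rfl, if_true, Nat.cast_ofNat] at h0
  rw [hx0, hu] at h0
  simp only [mul_one, one_mul] at h0
  have hne : (1 + t^2 : ℝ) ≠ 0 := by positivity
  have hQpos : (0:ℝ) < α*(α+2) + (1 + t^2) := by nlinarith [sq_nonneg (α+1), ht]
  have gen : ∀ y : ℝ, (1+t^2:ℝ)^y = (1+t^2:ℝ)^(y-1)*(1+t^2) := fun y => by
    rw [← Real.rpow_add_one hne (y-1), sub_add_cancel]
  have genQ : ∀ y : ℝ, (α*(α+2) + (1+t^2) : ℝ)^y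
      = (α*(α+2) + (1+t^2) : ℝ)^(y-1)*(α*(α+2)+(1+t^2)) := fun y => by
    rw [← Real.rpow_add_one hQpos.ne' (y-1), sub_add_cancel]
  rw [gen ((α-1)*(p-2)/2 + α/2), gen ((α-1)*(p-2)/2 + α/2 - 1),
    genQ ((p-2)/2)] at h0
  set A : ℝ := (1+t^2:ℝ) ^ ((α-1)*(p-2)/2 + α/2 - 1 - 1) with hA
  set B : ℝ := (α*(α+2) + (1+t^2) : ℝ) ^ ((p-2)/2 - 1) with hB
  have hApos : 0 < A := Real.rpow_pos_of_pos (by positivity) _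
  have hBpos : 0 < B := Real.rpow_pos_of_pos hQpos _
  have hfac : (A * B * (1+t^2)) *
      (α * (α + n + (p - 2) * (2 * α + 3)) * (1 + t^2)
        + α * ((α + 2) * (α * (α + n) + (p - 2) * (α ^ 2 + α - 1)))) = 0 := by
    linear_combination h0
  have hK : (A * B * (1+t^2) : ℝ) ≠ 0 := by positivity
  exact (mul_eq_zero.mp hfac).resolve_left hK


theorem stmt_11 (n : ℕ) (hn : 2 ≤ n) (p : ℝ) (hp : 1 < p) (α : ℝ)
    (v : EuclideanSpace ℝ (Fin n) → ℝ)
    (hv : v = fun y => ‖y‖ ^ α * y ⟨0, by omega⟩)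
    (h : ∀ x : EuclideanSpace ℝ (Fin n), x ≠ 0 → gradient v x ≠ 0 → pLaplacian p v x = 0) :
    (α + n + (p - 2) * (2 * α + 3) = 0 ∧
      (α + 2) * (α * (α + n) + (p - 2) * (α ^ 2 + α - 1)) = 0) ∨ α = 0 := by
  rcases eq_or_ne α 0 with h0 | hα
  · exact Or.inr h0
  · left
    have k1 := key n hn p hp α 1 hα one_pos v hv h
    have k2 := key n hn p hp α 2 hα two_pos v hv h
    have hA : α * (α + ↑n + (p - 2) * (2 * α + 3)) = 0 := by
      linear_combination (k2 - k1) / 3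
    have hB : α * ((α + 2) * (α * (α + ↑n) + (p - 2) * (α ^ 2 + α - 1))) = 0 := by
      linear_combination (5 * k1 - 2 * k2) / 3
    exact ⟨(mul_eq_zero.mp hA).resolve_left hα, (mul_eq_zero.mp hB).resolve_left hα⟩
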